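/- Let E be a measurable space, N ≥ 1, and let (T¹,Y¹), …, (Tᴺ,Yᴺ) be independent, identically distributed random pairs with values in (0,∞) × E. Assume that the law of T¹ is atomless and that T¹ is independent of Y¹. Then almost surely there is a unique index K₀ attaining min{T¹, …, Tᴺ}, and for every t ≥ 0 and every measurable set A ⊆ E, P( min_{1≤k≤N} Tᵏ > t and Y^{K₀} ∈ A ) = (P(T¹ > t))ᴺ · P(Y¹ ∈ A). In particular, Y^{K₀} has the same law as Y¹ and is independent of min_{1≤k≤N} Tᵏ. -/

import Mathlib

open MeasureTheory ProbabilityTheory Set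

section ParallelStepAux

variable {Ω : Type*} [MeasurableSpace Ω] {P : Measure Ω} [IsProbabilityMeasure P]

/-- If `X ⊥ Z` and `(X, Z) ⊥ W`, then `Z ⊥ (X, W)`. -/
lemma indep_triple_aux {β γ δ : Type*} [MeasurableSpace β] [MeasurableSpace γ]
    [MeasurableSpace δ] {X : Ω → β} {Z : Ω → γ} {W : Ω → δ}
    (hX : Measurable X) (hZ : Measurable Z) (hW : Measurable W)
    (h1 : IndepFun X Z P) (h2 : IndepFun (fun ω => (X ω, Z ω)) W P) :
    IndepFun Z (fun ω => (X ω, W ω)) P := by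
  have hXW : Measurable fun ω => (X ω, W ω) := hX.prodMk hW
  rw [IndepFun_iff_Indep]
  have himg : (Set.preimage (fun ω => (X ω, W ω)) ''
        (Set.image2 (· ×ˢ ·) { s : Set β | MeasurableSet s } { t : Set δ | MeasurableSet t }))
      = {s : Set Ω | ∃ t ∈ Set.image2 (· ×ˢ ·) { s : Set β | MeasurableSet s }
          { t : Set δ | MeasurableSet t }, (fun ω => (X ω, W ω)) ⁻¹' t = s} := by
    ext s
    simp only [Set.mem_image, Set.mem_setOf_eq]
  refine IndepSets.indep hZ.comap_le hXW.comap_le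
    (IsPiSystem.comap MeasurableSpace.isPiSystem_measurableSet Z)
    (IsPiSystem.comap isPiSystem_prod (fun ω => (X ω, W ω)))
    (MeasurableSpace.comap_eq_generateFrom _ _) ?_ ?_
  · rw [← generateFrom_prod, MeasurableSpace.comap_generateFrom, himg]
  · rw [IndepSets_iff]
    rintro a b ⟨A, hA, rfl⟩ ⟨u, hu, rfl⟩
    obtain ⟨s, hs, t, ht, rfl⟩ := hu
    have hb : (fun ω => (X ω, W ω)) ⁻¹' (s ×ˢ t) = X ⁻¹' s ∩ W ⁻¹' t :=
      Set.mk_preimage_prod X W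
    have e1 : Z ⁻¹' A ∩ (fun ω => (X ω, W ω)) ⁻¹' (s ×ˢ t)
        = ((fun ω => (X ω, Z ω)) ⁻¹' (s ×ˢ A)) ∩ W ⁻¹' t := by
      rw [hb, Set.mk_preimage_prod X Z]
      ext ω; simp only [Set.mem_inter_iff, Set.mem_preimage]; tauto
    have e2 : P ((fun ω => (X ω, Z ω)) ⁻¹' (s ×ˢ A))
        = P (X ⁻¹' s) * P (Z ⁻¹' A) := by
      rw [Set.mk_preimage_prod X Z]
      exact h1.meas_inter ⟨s, hs, rfl⟩ ⟨A, hA, rfl⟩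
    have e3 : P ((fun ω => (X ω, Z ω)) ⁻¹' (s ×ˢ A) ∩ W ⁻¹' t)
        = P ((fun ω => (X ω, Z ω)) ⁻¹' (s ×ˢ A)) * P (W ⁻¹' t) :=
      h2.meas_inter ⟨s ×ˢ A, hs.prod hA, rfl⟩ ⟨t, ht, rfl⟩
    have e4 : P (X ⁻¹' s ∩ W ⁻¹' t) = P (X ⁻¹' s) * P (W ⁻¹' t) := by
      have : X ⁻¹' s = (fun ω => (X ω, Z ω)) ⁻¹' (s ×ˢ univ) := by
        rw [Set.mk_preimage_prod X Z]; simp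
      rw [this]
      exact h2.meas_inter ⟨s ×ˢ univ, hs.prod MeasurableSet.univ, rfl⟩ ⟨t, ht, rfl⟩
    rw [e1, e3, e2, hb, e4]
    ring

/-- Two independent real random variables, the second with atomless law, are a.s. distinct. -/
lemma indep_eq_null_aux {f g : Ω → ℝ} (hf : Measurable f) (hg : Measurable g)
    (h : IndepFun f g P) (hg0 : ∀ x : ℝ, P {ω | g ω = x} = 0) :
    P {ω | f ω = g ω} = 0 := by
  have hd : MeasurableSet {p : ℝ × ℝ | p.1 = p.2} :=
    measurableSet_eq_fun measurable_fst measurable_snd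
  have hmap : P.map (fun ω => (f ω, g ω)) = (P.map f).prod (P.map g) :=
    (indepFun_iff_map_prod_eq_prod_map_map hf.aemeasurable hg.aemeasurable).1 h
  have h1 : P {ω | f ω = g ω} = P.map (fun ω => (f ω, g ω)) {p : ℝ × ℝ | p.1 = p.2} := by
    rw [Measure.map_apply (hf.prodMk hg) hd]; rfl
  rw [h1, hmap, Measure.prod_apply hd]
  have h2 : ∀ x : ℝ, (P.map g) {x} = 0 := by
    intro x
    rw [Measure.map_apply hg (measurableSet_singleton x)]
    exact hg0 x
  have h3 : ∀ x : ℝ, Prod.mk x ⁻¹' {p : ℝ × ℝ | p.1 = p.2} = {x} := by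
    intro x; ext y; simp [eq_comm]
  simp [h3, h2]

end ParallelStepAux

/-- Parallel step, second assertion: `(Tᵏ, Yᵏ)` are i.i.d. pairs (exit time, hitting point)
with values in `(0,∞) × E`, the law of `T¹` is atomless and `T¹` is independent of `Y¹`.
Then a.s. there is a unique index attaining `min Tᵏ`, and for any (measurable) selection `K₀`
of the argmin, the joint law factorizes:
`P(min Tᵏ > t, Y^{K₀} ∈ A) = (P(T¹ > t))ᴺ · P(Y¹ ∈ A)`.
In particular `Y^{K₀}` has the same law as `Y¹` and is independent of `min Tᵏ`. -/
theorem parallel_step_hitting_point {Ω : Type*} [MeasurableSpace Ω] (P : Measure Ω)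
    [IsProbabilityMeasure P] {E : Type*} [MeasurableSpace E]
    (N : ℕ) (hN : 0 < N) (T : Fin N → Ω → ℝ) (Y : Fin N → Ω → E)
    (hTmeas : ∀ k, Measurable (T k)) (hYmeas : ∀ k, Measurable (Y k))
    (hTpos : ∀ k ω, 0 < T k ω)
    (hindep : iIndepFun (fun k ω => (T k ω, Y k ω)) P)
    (hident : ∀ k, Measure.map (fun ω => (T k ω, Y k ω)) P
      = Measure.map (fun ω => (T ⟨0, hN⟩ ω, Y ⟨0, hN⟩ ω)) P)
    (hatomless : ∀ x : ℝ, P {ω | T ⟨0, hN⟩ ω = x} = 0)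
    (hTYindep : IndepFun (T ⟨0, hN⟩) (Y ⟨0, hN⟩) P) :
    (∀ᵐ ω ∂P, ∃! k, T k ω = ⨅ j, T j ω) ∧
      ∀ K : Ω → Fin N, Measurable K → (∀ᵐ ω ∂P, T (K ω) ω = ⨅ j, T j ω) →
        (∀ t : ℝ, 0 ≤ t → ∀ A : Set E, MeasurableSet A →
            P {ω | t < (⨅ j, T j ω) ∧ Y (K ω) ω ∈ A}
              = (P {ω | t < T ⟨0, hN⟩ ω}) ^ N * P {ω | Y ⟨0, hN⟩ ω ∈ A}) ∧
          Measure.map (fun ω => Y (K ω) ω) P = Measure.map (Y ⟨0, hN⟩) P ∧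
          IndepFun (fun ω => ⨅ j, T j ω) (fun ω => Y (K ω) ω) P := by
  classical
  haveI : Nonempty (Fin N) := ⟨⟨0, hN⟩⟩
  set i0 : Fin N := ⟨0, hN⟩ with hi0def
  have hpair : ∀ k, Measurable fun ω => (T k ω, Y k ω) :=
    fun k => (hTmeas k).prodMk (hYmeas k)
  have hInf : Measurable fun ω => ⨅ j, T j ω := Measurable.iInf hTmeas
  -- identical marginal laws
  have hTlaw : ∀ k, P.map (T k) = P.map (T i0) := by
    intro k
    have h1 : P.map (T k) = (P.map (fun ω => (T k ω, Y k ω))).map Prod.fst :=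
      (Measure.map_map measurable_fst (hpair k)).symm
    have h2 : P.map (T i0) = (P.map (fun ω => (T i0 ω, Y i0 ω))).map Prod.fst :=
      (Measure.map_map measurable_fst (hpair i0)).symm
    rw [h1, h2, hident k]
  have hYlaw : ∀ k, P.map (Y k) = P.map (Y i0) := by
    intro k
    have h1 : P.map (Y k) = (P.map (fun ω => (T k ω, Y k ω))).map Prod.snd :=
      (Measure.map_map measurable_snd (hpair k)).symm
    have h2 : P.map (Y i0) = (P.map (fun ω => (T i0 ω, Y i0 ω))).map Prod.snd :=
      (Measure.map_map measurable_snd (hpair i0)).symm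
    rw [h1, h2, hident k]
  have hTpre : ∀ k (s : Set ℝ), MeasurableSet s → P (T k ⁻¹' s) = P (T i0 ⁻¹' s) := by
    intro k s hs
    rw [← Measure.map_apply (hTmeas k) hs, ← Measure.map_apply (hTmeas i0) hs, hTlaw k]
  have hYpre : ∀ k (A : Set E), MeasurableSet A → P (Y k ⁻¹' A) = P (Y i0 ⁻¹' A) := by
    intro k A hA
    rw [← Measure.map_apply (hYmeas k) hA, ← Measure.map_apply (hYmeas i0) hA, hYlaw k]
  have hatom : ∀ k (x : ℝ), P {ω | T k ω = x} = 0 := by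
    intro k x
    have : {ω | T k ω = x} = T k ⁻¹' {x} := by ext ω; simp
    rw [this, hTpre k {x} (measurableSet_singleton x)]
    have : T i0 ⁻¹' {x} = {ω | T i0 ω = x} := by ext ω; simp
    rw [this]; exact hatomless x
  -- the T's are independent
  have hT_indep : iIndepFun T P := by
    have := hindep.comp (fun _ => (Prod.fst : ℝ × E → ℝ)) (fun _ => measurable_fst)
    exact this
  -- each T k is independent of Y k
  have hTYk : ∀ k, IndepFun (T k) (Y k) P := by
    intro k
    rw [indepFun_iff_map_prod_eq_prod_map_map (hTmeas k).aemeasurable (hYmeas k).aemeasurable]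
    rw [hident k, hTlaw k, hYlaw k]
    exact (indepFun_iff_map_prod_eq_prod_map_map (hTmeas i0).aemeasurable
      (hYmeas i0).aemeasurable).1 hTYindep
  -- ties are null
  have hne : ∀ k j, k ≠ j → P {ω | T k ω = T j ω} = 0 := fun k j hkj =>
    indep_eq_null_aux (hTmeas k) (hTmeas j) (hT_indep.indepFun hkj) (hatom j)
  have hG : ∀ᵐ ω ∂P, ∀ k j, k ≠ j → T k ω ≠ T j ω := by
    rw [ae_all_iff]; intro k; rw [ae_all_iff]; intro j
    rcases eq_or_ne k j with rfl | h
    · filter_upwards with ω h'; exact absurd rfl h'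
    · have : ∀ᵐ ω ∂P, ¬ (T k ω = T j ω) := by
        rw [ae_iff]; simpa using hne k j h
      filter_upwards [this] with ω hω _; exact hω
  have hmin_attain : ∀ ω, ∃ k, T k ω = ⨅ j, T j ω := fun ω => exists_eq_ciInf_of_finite
  have hle_inf : ∀ (ω) (k), (⨅ j, T j ω) ≤ T k ω :=
    fun ω k => ciInf_le (Finite.bddBelow_range _) k
  have hlt_inf_iff : ∀ (t : ℝ) (ω), t < (⨅ j, T j ω) ↔ ∀ j, t < T j ω := by
    intro t ω
    constructor
    · intro h j; exact h.trans_le (hle_inf ω j)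
    · intro h; obtain ⟨k, hk⟩ := hmin_attain ω; rw [← hk]; exact h k
  have hInfPos : ∀ ω, 0 < ⨅ j, T j ω := by
    intro ω; obtain ⟨k, hk⟩ := hmin_attain ω; rw [← hk]; exact hTpos k ω
  -- a.s. unique argmin
  have hfirst : ∀ᵐ ω ∂P, ∃! k, T k ω = ⨅ j, T j ω := by
    filter_upwards [hG] with ω hω
    obtain ⟨k, hk⟩ := hmin_attain ω
    refine ⟨k, hk, fun j hj => ?_⟩
    by_contra hne'
    exact hω j k hne' (hj.trans hk.symm)
  -- survival product formula
  have hSurv : ∀ t : ℝ, P {ω | t < ⨅ j, T j ω} = (P {ω | t < T i0 ω}) ^ N := by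
    intro t
    have h1 : {ω | t < ⨅ j, T j ω} = ⋂ k, T k ⁻¹' Ioi t := by
      ext ω; simp only [Set.mem_setOf_eq, Set.mem_iInter, Set.mem_preimage, Set.mem_Ioi]
      exact hlt_inf_iff t ω
    rw [h1, hT_indep.meas_iInter (fun k => ⟨Ioi t, measurableSet_Ioi, rfl⟩)]
    have h2 : ∀ k : Fin N, P (T k ⁻¹' Ioi t) = P {ω | t < T i0 ω} := by
      intro k
      rw [hTpre k _ measurableSet_Ioi]
      rfl
    rw [Finset.prod_congr rfl (fun k _ => h2 k), Finset.prod_const, Finset.card_univ,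
      Fintype.card_fin]
  refine ⟨hfirst, fun K hKmeas hKmin => ?_⟩
  -- measurability of ω ↦ Y (K ω) ω
  have hYK : Measurable fun ω => Y (K ω) ω := by
    have h1 : Measurable fun p : Ω × Fin N => Y p.2 p.1 :=
      measurable_from_prod_countable_left (fun k => hYmeas k)
    exact h1.comp (measurable_id.prodMk hKmeas)
  -- the strict argmin events
  set B : Fin N → ℝ → Set Ω :=
    fun k t => {ω | t < T k ω ∧ ∀ j, j ≠ k → T k ω < T j ω} with hBdef
  have hBmeas : ∀ k t, MeasurableSet (B k t) := by
    intro k t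
    have : B k t = (T k ⁻¹' Ioi t) ∩ ⋂ j, {ω | j ≠ k → T k ω < T j ω} := by
      ext ω
      simp only [hBdef, Set.mem_setOf_eq, Set.mem_inter_iff, Set.mem_preimage, Set.mem_Ioi,
        Set.mem_iInter]
    rw [this]
    refine ((hTmeas k) measurableSet_Ioi).inter (MeasurableSet.iInter fun j => ?_)
    rcases eq_or_ne j k with rfl | h
    · have : {ω | j ≠ j → T j ω < T j ω} = univ := by
        ext ω; simp
      rw [this]; exact MeasurableSet.univ
    · have : {ω | j ≠ k → T k ω < T j ω} = {ω | T k ω < T j ω} := by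
        ext ω; simp [h]
      rw [this]; exact measurableSet_lt (hTmeas k) (hTmeas j)
  -- B k t ⊆ {t < inf} and on B k t, T k is the min
  have hBinf : ∀ k t ω, ω ∈ B k t → T k ω = ⨅ j, T j ω := by
    intro k t ω hω
    refine le_antisymm (le_ciInf fun j => ?_) (hle_inf ω k)
    rcases eq_or_ne j k with rfl | h
    · exact le_rfl
    · exact (hω.2 j h).le
  -- pairwise disjointness of the B's
  have hBdisj : ∀ t : ℝ, Pairwise (Function.onFun Disjoint fun k => B k t) := by
    intro t k j hkj
    rw [Function.onFun, Set.disjoint_left]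
    rintro ω ⟨_, hk⟩ ⟨_, hj⟩
    exact absurd ((hk j (Ne.symm hkj)).trans (hj k hkj)) (lt_irrefl _)
  -- factorization for each B k t against Y k
  have hfac : ∀ (k) (t : ℝ) (A : Set E), MeasurableSet A →
      P (B k t ∩ Y k ⁻¹' A) = P (B k t) * P (Y k ⁻¹' A) := by
    intro k t A hA
    -- independence of Y k from (T k, rest of the T's)
    have hrest_meas : Measurable fun ω (j : ({k}ᶜ : Finset (Fin N))) => T (j : Fin N) ω :=
      measurable_pi_lambda _ fun j => hTmeas j
    have hpair_rest : IndepFun (fun ω => (T k ω, Y k ω))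
        (fun ω (j : ({k}ᶜ : Finset (Fin N))) => T (j : Fin N) ω) P := by
      have h := hindep.indepFun_finset {k} ({k}ᶜ) disjoint_compl_right hpair
      have h2 := h.comp
        (φ := fun v : (({k} : Finset (Fin N)) → ℝ × E) => v ⟨k, Finset.mem_singleton_self k⟩)
        (ψ := fun (v : (({k}ᶜ : Finset (Fin N)) → ℝ × E)) (j : ({k}ᶜ : Finset (Fin N))) =>
          (v j).1)
        (measurable_pi_apply _ : Measurable
          fun v : (({k} : Finset (Fin N)) → ℝ × E) => v ⟨k, Finset.mem_singleton_self k⟩)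
        (measurable_pi_lambda _ fun j => measurable_fst.comp (measurable_pi_apply j))
      exact h2
    have hkey : IndepFun (Y k)
        (fun ω => (T k ω, fun j : ({k}ᶜ : Finset (Fin N)) => T (j : Fin N) ω)) P :=
      indep_triple_aux (hTmeas k) (hYmeas k) hrest_meas (hTYk k) hpair_rest
    -- express B k t as a preimage
    set Sk : Set (ℝ × (({k}ᶜ : Finset (Fin N)) → ℝ)) :=
      {p | t < p.1 ∧ ∀ j, p.1 < p.2 j} with hSkdef
    have hSk : MeasurableSet Sk := by
      have h1 : MeasurableSet {p : ℝ × (({k}ᶜ : Finset (Fin N)) → ℝ) | t < p.1} :=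
        measurableSet_lt measurable_const measurable_fst
      have h2 : MeasurableSet {p : ℝ × (({k}ᶜ : Finset (Fin N)) → ℝ) | ∀ j, p.1 < p.2 j} := by
        have : {p : ℝ × (({k}ᶜ : Finset (Fin N)) → ℝ) | ∀ j, p.1 < p.2 j}
            = ⋂ j, {p : ℝ × (({k}ᶜ : Finset (Fin N)) → ℝ) | p.1 < p.2 j} := by
          ext p; simp
        rw [this]
        exact MeasurableSet.iInter fun j =>
          measurableSet_lt measurable_fst ((measurable_pi_apply j).comp measurable_snd)
      have : Sk = {p : ℝ × (({k}ᶜ : Finset (Fin N)) → ℝ) | t < p.1}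
          ∩ {p : ℝ × (({k}ᶜ : Finset (Fin N)) → ℝ) | ∀ j, p.1 < p.2 j} := by
        ext p; simp [hSkdef, Set.mem_setOf_eq]
      rw [this]; exact h1.inter h2
    have hpre : (fun ω => (T k ω, fun j : ({k}ᶜ : Finset (Fin N)) => T (j : Fin N) ω)) ⁻¹' Sk
        = B k t := by
      ext ω
      simp only [hSkdef, hBdef, Set.mem_preimage, Set.mem_setOf_eq, Subtype.forall,
        Finset.mem_compl, Finset.mem_singleton]
    have := hkey.symm.meas_inter (s := B k t) (t := Y k ⁻¹' A)
      ⟨Sk, hSk, hpre⟩ ⟨A, hA, rfl⟩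
    exact this
  -- the main factorization, for every real t
  have hmain : ∀ (t : ℝ) (A : Set E), MeasurableSet A →
      P {ω | t < (⨅ j, T j ω) ∧ Y (K ω) ω ∈ A}
        = (P {ω | t < T i0 ω}) ^ N * P (Y i0 ⁻¹' A) := by
    intro t A hA
    have haeU : {ω | t < (⨅ j, T j ω) ∧ Y (K ω) ω ∈ A}
        =ᵐ[P] ⋃ k, B k t ∩ Y k ⁻¹' A := by
      rw [Filter.eventuallyEq_set]
      filter_upwards [hG, hKmin] with ω hdist hKω
      constructor
      · rintro ⟨ht, hYA⟩
        refine Set.mem_iUnion.2 ⟨K ω, ⟨(hlt_inf_iff t ω).1 ht (K ω), fun j hj => ?_⟩, hYA⟩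
        have h1 : T (K ω) ω ≤ T j ω := by
          rw [hKω]; exact hle_inf ω j
        exact h1.lt_of_ne (hdist (K ω) j (Ne.symm hj))
      · intro hU
        obtain ⟨k, hk⟩ := Set.mem_iUnion.1 hU
        obtain ⟨hB, hYk⟩ := hk
        have hinfk : T k ω = ⨅ j, T j ω := hBinf k t ω hB
        have hKk : K ω = k := by
          by_contra hne'
          have h1 : T k ω < T (K ω) ω := hB.2 (K ω) hne'
          rw [hinfk, ← hKω] at h1
          exact lt_irrefl _ h1
        refine ⟨?_, ?_⟩
        · rw [← hinfk]; exact hB.1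
        · rw [hKk]; exact hYk
    rw [measure_congr haeU]
    have hdisj : Pairwise (Function.onFun Disjoint fun k => B k t ∩ Y k ⁻¹' A) := by
      intro k j hkj
      exact Disjoint.mono (Set.inter_subset_left) (Set.inter_subset_left) (hBdisj t hkj)
    rw [measure_iUnion hdisj (fun k => (hBmeas k t).inter ((hYmeas k) hA))]
    have hsum : ∀ k : Fin N, P (B k t ∩ Y k ⁻¹' A) = P (B k t) * P (Y i0 ⁻¹' A) := by
      intro k; rw [hfac k t A hA, hYpre k A hA]
    rw [tsum_congr hsum, ENNReal.tsum_mul_right]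
    congr 1
    -- ∑ k, P (B k t) = P {t < inf}
    have haeB : (⋃ k, B k t) =ᵐ[P] {ω | t < ⨅ j, T j ω} := by
      rw [Filter.eventuallyEq_set]
      filter_upwards [hG] with ω hdist
      constructor
      · intro hU
        obtain ⟨k, hk⟩ := Set.mem_iUnion.1 hU
        have h1 := hBinf k t ω hk
        show t < ⨅ j, T j ω
        rw [← h1]; exact hk.1
      · intro ht
        obtain ⟨k, hk⟩ := hmin_attain ω
        refine Set.mem_iUnion.2 ⟨k, (hlt_inf_iff t ω).1 ht k, fun j hj => ?_⟩
        have h1 : T k ω ≤ T j ω := by rw [hk]; exact hle_inf ω j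
        exact h1.lt_of_ne (hdist k j (Ne.symm hj))
    calc (∑' k, P (B k t)) = P (⋃ k, B k t) :=
          (measure_iUnion (hBdisj t) (fun k => hBmeas k t)).symm
      _ = P {ω | t < ⨅ j, T j ω} := measure_congr haeB
      _ = (P {ω | t < T i0 ω}) ^ N := hSurv t
  -- conclusions
  have hYKlaw : Measure.map (fun ω => Y (K ω) ω) P = Measure.map (Y i0) P := by
    refine Measure.ext fun A hA => ?_
    rw [Measure.map_apply hYK hA, Measure.map_apply (hYmeas i0) hA]
    have h1 : (fun ω => Y (K ω) ω) ⁻¹' A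
        = {ω | (-1 : ℝ) < (⨅ j, T j ω) ∧ Y (K ω) ω ∈ A} := by
      ext ω
      simp only [Set.mem_preimage, Set.mem_setOf_eq, iff_and_self]
      intro _
      exact lt_trans (by norm_num) (hInfPos ω)
    have h2 : {ω | (-1 : ℝ) < T i0 ω} = univ := by
      ext ω; simp only [Set.mem_setOf_eq, Set.mem_univ, iff_true]
      exact lt_trans (by norm_num) (hTpos i0 ω)
    rw [h1, hmain (-1) A hA, h2]
    simp
  refine ⟨fun t _ A hA => hmain t A hA, hYKlaw, ?_⟩
  -- independence of the min and the hitting point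
  rw [IndepFun_iff_Indep]
  have himg2 : (Set.preimage (fun ω => ⨅ j, T j ω) '' Set.range (Set.Ioi : ℝ → Set ℝ))
      = {s : Set Ω | ∃ u ∈ Set.range (Set.Ioi : ℝ → Set ℝ),
          (fun ω => ⨅ j, T j ω) ⁻¹' u = s} := by
    ext s
    simp only [Set.mem_image, Set.mem_setOf_eq]
  have hgen1 : (MeasurableSpace.comap (fun ω => ⨅ j, T j ω) inferInstance : MeasurableSpace Ω)
      = MeasurableSpace.generateFrom
        {s : Set Ω | ∃ u ∈ Set.range (Set.Ioi : ℝ → Set ℝ), (fun ω => ⨅ j, T j ω) ⁻¹' u = s} := by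
    conv_lhs => rw [(by exact BorelSpace.measurable_eq : (inferInstance : MeasurableSpace ℝ)
      = borel ℝ), borel_eq_generateFrom_Ioi ℝ, MeasurableSpace.comap_generateFrom]
    rw [himg2]
  refine IndepSets.indep hInf.comap_le hYK.comap_le ?_
    (IsPiSystem.comap MeasurableSpace.isPiSystem_measurableSet (fun ω => Y (K ω) ω))
    hgen1 (MeasurableSpace.comap_eq_generateFrom _ _) ?_
  · -- π-system of Ioi preimages
    rintro _ ⟨_, ⟨a, rfl⟩, rfl⟩ _ ⟨_, ⟨b, rfl⟩, rfl⟩ _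
    refine ⟨Ioi (max a b), ⟨max a b, rfl⟩, ?_⟩
    rw [← Set.preimage_inter, Ioi_inter_Ioi]
  · -- independence on generators
    rw [IndepSets_iff]
    rintro s u ⟨_, ⟨t, rfl⟩, rfl⟩ ⟨A, hA, rfl⟩
    have h1 : (fun ω => ⨅ j, T j ω) ⁻¹' Ioi t ∩ (fun ω => Y (K ω) ω) ⁻¹' A
        = {ω | t < (⨅ j, T j ω) ∧ Y (K ω) ω ∈ A} := by
      ext ω; simp [Set.mem_Ioi]
    have h2 : (fun ω => ⨅ j, T j ω) ⁻¹' Ioi t = {ω | t < ⨅ j, T j ω} := by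
      ext ω; simp [Set.mem_Ioi]
    have h3 : P ((fun ω => Y (K ω) ω) ⁻¹' A) = P (Y i0 ⁻¹' A) := by
      rw [← Measure.map_apply hYK hA, hYKlaw, Measure.map_apply (hYmeas i0) hA]
    rw [h1, h2, hmain t A hA, hSurv t, h3]
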